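/- Let 1 ≤ j < m. The F-linear map F[X] → End_F(U) given by g(X) ↦ T^j ∘ g(E) is, onto its image T^j𝓔, a surjection with kernel exactly the ideal (p₁^{s_{j+1}}); in particular dim_F T^j𝓔 = d·s_{j+1}. Moreover T^m = 0. -/

import Mathlib

open Polynomial

/-- The shifted polynomial `p_{i+1}(X) = p₁(X + i)`: we use 0-based indexing for the
paper's `p_i(X) = p₁(X + (i−1))`, `1 ≤ i ≤ m`. -/
noncomputable def pShift {F : Type*} [Field F] (q : Polynomial F) (i : ℕ) : Polynomial F :=
  q.comp (X + C (i : F))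

/-- The `F[X]`-module `U = U₁ ⊕ ⋯ ⊕ U_m`, where `U_{i+1} = F[X]·u_{i+1} ≅
F[X]/(p_{i+1}^{s_{i+1}})` (0-based indexing). -/
def Uspace (F : Type*) [Field F] (q : Polynomial F) (m : ℕ) (s : Fin m → ℕ) : Type _ :=
  (i : Fin m) → Polynomial F ⧸ Ideal.span {(pShift q i) ^ (s i)}

noncomputable instance {F : Type*} [Field F] (q : Polynomial F) (m : ℕ) (s : Fin m → ℕ) :
    AddCommGroup (Uspace F q m s) :=
  inferInstanceAs (AddCommGroup ((i : Fin m) → Polynomial F ⧸ Ideal.span {(pShift q i) ^ (s i)}))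

noncomputable instance {F : Type*} [Field F] (q : Polynomial F) (m : ℕ) (s : Fin m → ℕ) :
    Module F (Uspace F q m s) :=
  inferInstanceAs (Module F ((i : Fin m) → Polynomial F ⧸ Ideal.span {(pShift q i) ^ (s i)}))

/-- The operator `A ∈ End_F(U)`: multiplication by `X`. -/
noncomputable def Aop (F : Type*) [Field F] (q : Polynomial F) (m : ℕ) (s : Fin m → ℕ) :
    Module.End F (Uspace F q m s) :=
  LinearMap.pi fun i =>
    (LinearMap.mulLeft F (Ideal.Quotient.mk (Ideal.span {(pShift q i) ^ (s i)}) X)).comp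
      (LinearMap.proj i)

/-- The operator `E ∈ End_F(U)`: the `F[X]`-linear map with `E u_i = (X + (i−1)) u_i`
(0-based: on the `i`-th component it is multiplication by `X + i`). -/
noncomputable def Eop (F : Type*) [Field F] (q : Polynomial F) (m : ℕ) (s : Fin m → ℕ) :
    Module.End F (Uspace F q m s) :=
  LinearMap.pi fun i =>
    (LinearMap.mulLeft F
        (Ideal.Quotient.mk (Ideal.span {(pShift q i) ^ (s i)}) (X + C (i : F)))).comp
      (LinearMap.proj i)

/-- Componentwise multiplication by the polynomial `g` on `U` (the action `u ↦ g(X)·u`). -/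
noncomputable def polySmul {F : Type*} [Field F] {q : Polynomial F} {m : ℕ} {s : Fin m → ℕ}
    (g : Polynomial F) (u : Uspace F q m s) : Uspace F q m s :=
  fun i => Ideal.Quotient.mk (Ideal.span {(pShift q i) ^ (s i)}) g * u i

/-- The canonical generator `u_{i+1}` of the summand `U_{i+1}` (0-based). -/
noncomputable def uGen (F : Type*) [Field F] (q : Polynomial F) (m : ℕ) (s : Fin m → ℕ)
    (i : Fin m) : Uspace F q m s :=
  Pi.single i 1

/-- The standing assumptions on the data: `p₁ = q` is monic irreducible of degree `d`,
`m > 1`, and `s₁ ≥ s₂ ≥ ⋯ ≥ s_m ≥ 1`. -/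
structure GoodData (F : Type*) [Field F] (q : Polynomial F) (d m : ℕ) (s : Fin m → ℕ) :
    Prop where
  monic : q.Monic
  irr : Irreducible q
  deg : q.natDegree = d
  hm : 1 < m
  dec : ∀ i j : Fin m, i ≤ j → s j ≤ s i
  pos : ∀ i, 1 ≤ s i

/-- `T` is the operator of the paper: the unique `F`-linear endomorphism of `U` with
`T u₁ = 0`, `T u_i = p_{i−1}(X)^{s_{i−1}−s_i} u_{i−1}` for `2 ≤ i ≤ m`, and
`T(g(X+1)·u) = g(X)·(T u)` for all `g ∈ F[X]`, `u ∈ U`. -/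
def IsTmap {F : Type*} [Field F] (q : Polynomial F) (m : ℕ) (s : Fin m → ℕ)
    (T : Module.End F (Uspace F q m s)) : Prop :=
  (∀ h0 : 0 < m, T (uGen F q m s ⟨0, h0⟩) = 0) ∧
  (∀ (i : ℕ) (hi : i + 1 < m),
      T (uGen F q m s ⟨i + 1, hi⟩) =
        polySmul ((pShift q i) ^ (s ⟨i, by omega⟩ - s ⟨i + 1, hi⟩))
          (uGen F q m s ⟨i, by omega⟩)) ∧
  (∀ (g : Polynomial F) (u : Uspace F q m s),
      T (polySmul (g.comp (X + C 1)) u) = polySmul g (T u))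

section Aux
variable {F : Type*} [Field F] (q : Polynomial F) (m : ℕ) (s : Fin m → ℕ)

lemma smul_mk' (I : Ideal (Polynomial F)) (a : F) (x : Polynomial F ⧸ I) :
    a • x = Ideal.Quotient.mk I (C a) * x := by
  obtain ⟨p, rfl⟩ := Ideal.Quotient.mk_surjective x
  rw [← map_mul, ← smul_eq_C_mul]
  rfl

lemma comp_sub_sub (h : Polynomial F) (a b : F) :
    (h.comp (X - C a)).comp (X - C b) = h.comp (X - C (a + b)) := by
  rw [Polynomial.comp_assoc]
  congr 1
  rw [sub_comp, X_comp, C_comp, C_add]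
  ring

lemma comp_add_comp_sub (h : Polynomial F) (a : F) :
    (h.comp (X + C a)).comp (X - C a) = h.comp (X - C a + C a) := by
  rw [Polynomial.comp_assoc, add_comp, X_comp, C_comp]

lemma comp_add_sub (h : Polynomial F) (a b : F) :
    (h.comp (X + C a)).comp (X - C b) = h.comp (X + C (a - b)) := by
  rw [Polynomial.comp_assoc]
  congr 1
  rw [add_comp, X_comp, C_comp, C_sub]
  ring

lemma q_comp_comp (i j : ℕ) :
    (q.comp (X + C ((i + j : ℕ) : F))).comp (X - C (j : F)) = pShift q i := by
  rw [Polynomial.comp_assoc, pShift]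
  congr 1
  rw [add_comp, X_comp, C_comp]
  push_cast
  rw [C_add]
  ring

lemma pShift_zero : pShift q 0 = q := by
  simp [pShift]

lemma uadd (u v : Uspace F q m s) (i : Fin m) : (u + v) i = u i + v i := rfl
lemma uzero (i : Fin m) : (0 : Uspace F q m s) i = 0 := rfl
lemma usmul (a : F) (u : Uspace F q m s) (i : Fin m) : (a • u) i = a • u i := rfl

lemma polySmul_single (g : Polynomial F) (i : Fin m)
    (x : Polynomial F ⧸ Ideal.span {(pShift q i) ^ (s i)}) :
    polySmul g (Pi.single i x : Uspace F q m s) =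
      Pi.single i (Ideal.Quotient.mk _ g * x) := by
  funext k
  rcases eq_or_ne k i with rfl | hk
  · simp [polySmul]
  · simp [polySmul, Pi.single_eq_of_ne hk]

lemma polySmul_polySmul (g h : Polynomial F) (u : Uspace F q m s) :
    polySmul g (polySmul h u) = polySmul (g * h) u := by
  funext i
  simp [polySmul, map_mul, mul_assoc]

lemma polySmul_zero' (g : Polynomial F) : polySmul g (0 : Uspace F q m s) = 0 := by
  funext i
  simp [polySmul, uzero]

lemma polySmul_uGen (g : Polynomial F) (i : Fin m) :
    polySmul g (uGen F q m s i) = Pi.single i (Ideal.Quotient.mk _ g) := by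
  rw [uGen, polySmul_single, mul_one]

lemma single_mk_eq_zero (i : Fin m) (P : Polynomial F)
    (hd : pShift q (i : ℕ) ^ s i ∣ P) :
    (Pi.single i (Ideal.Quotient.mk (Ideal.span {(pShift q i) ^ (s i)}) P) :
        Uspace F q m s) = 0 := by
  rw [Ideal.Quotient.eq_zero_iff_mem.mpr (Ideal.mem_span_singleton.mpr hd), Pi.single_zero]

lemma Eop_pow_apply (n : ℕ) (u : Uspace F q m s) (i : Fin m) :
    ((Eop F q m s) ^ n) u i =
      (Ideal.Quotient.mk _ (X + C ((i : ℕ) : F))) ^ n * u i := by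
  induction n generalizing u with
  | zero => simp
  | succ n ih =>
      rw [pow_succ, Module.End.mul_apply, ih,
        show (Eop F q m s u) i =
          Ideal.Quotient.mk _ (X + C ((i : ℕ) : F)) * u i from rfl,
        pow_succ, mul_assoc]

lemma aeval_Eop (g : Polynomial F) (u : Uspace F q m s) (i : Fin m) :
    (Polynomial.aeval (Eop F q m s) g) u i =
      Ideal.Quotient.mk _ (g.comp (X + C ((i : ℕ) : F))) * u i := by
  induction g using Polynomial.induction_on' with
  | add p r hp hr =>
      rw [map_add, LinearMap.add_apply, uadd, hp, hr, add_comp, map_add, add_mul]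
  | monomial n a =>
      rw [Polynomial.aeval_monomial, Module.End.mul_apply,
        Module.algebraMap_end_eq_smul_id, LinearMap.smul_apply, LinearMap.id_apply,
        usmul, Eop_pow_apply, smul_mk', ← C_mul_X_pow_eq_monomial, mul_comp, C_comp,
        pow_comp, X_comp, map_mul, map_pow, mul_assoc]

lemma aeval_Eop_single (g h : Polynomial F) (i : Fin m) :
    (Polynomial.aeval (Eop F q m s) g)
        (Pi.single i (Ideal.Quotient.mk _ h) : Uspace F q m s) =
      Pi.single i (Ideal.Quotient.mk _ (g.comp (X + C ((i : ℕ) : F)) * h)) := by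
  funext k
  rcases eq_or_ne k i with rfl | hk
  · exact (aeval_Eop q m s g _ k).trans (by rw [Pi.single_eq_same, Pi.single_eq_same, map_mul])
  · exact (aeval_Eop q m s g _ k).trans (by rw [Pi.single_eq_of_ne hk, Pi.single_eq_of_ne hk, mul_zero])

end Aux

section Tlem
variable {F : Type*} [Field F] (q : Polynomial F) (m : ℕ) (s : Fin m → ℕ)
  (T : Module.End F (Uspace F q m s))

lemma Tzero' (hT : IsTmap q m s T) (h0 : 0 < m) (h : Polynomial F) :
    T (Pi.single ⟨0, h0⟩ (Ideal.Quotient.mk _ h) : Uspace F q m s) = 0 := by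
  have e1 : ((h.comp (X - C 1)).comp (X + C 1)) = h := by
    rw [Polynomial.comp_assoc]; simp
  have h2 := hT.2.2 (h.comp (X - C 1)) (uGen F q m s ⟨0, h0⟩)
  rw [e1, hT.1 h0, polySmul_zero', polySmul_uGen] at h2
  exact h2

lemma Tstep (hT : IsTmap q m s T) (i : ℕ) (hi : i + 1 < m) (h : Polynomial F) :
    T (Pi.single ⟨i + 1, hi⟩ (Ideal.Quotient.mk _ h) : Uspace F q m s) =
      (Pi.single ⟨i, by omega⟩ (Ideal.Quotient.mk _
        (h.comp (X - C 1) * (pShift q i) ^ (s ⟨i, by omega⟩ - s ⟨i + 1, hi⟩))) :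
        Uspace F q m s) := by
  have e1 : ((h.comp (X - C 1)).comp (X + C 1)) = h := by
    rw [Polynomial.comp_assoc]; simp
  have h2 := hT.2.2 (h.comp (X - C 1)) (uGen F q m s ⟨i + 1, hi⟩)
  rw [e1, hT.2.1 i hi, polySmul_polySmul, polySmul_uGen, polySmul_uGen] at h2
  exact h2

lemma Tpow (hdec : ∀ i j : Fin m, i ≤ j → s j ≤ s i) (hT : IsTmap q m s T) :
    ∀ (j i : ℕ) (hij : i + j < m) (h : Polynomial F),
      (T ^ j) (Pi.single ⟨i + j, hij⟩ (Ideal.Quotient.mk _ h) : Uspace F q m s) =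
        (Pi.single ⟨i, by omega⟩ (Ideal.Quotient.mk _
          (h.comp (X - C (j : F)) *
            (pShift q i) ^ (s ⟨i, by omega⟩ - s ⟨i + j, hij⟩))) :
          Uspace F q m s) := by
  intro j
  induction j with
  | zero =>
      intro i hij h
      simp
      rfl
  | succ j ih =>
      intro i hij h
      have hij' : i + j + 1 < m := hij
      show (T ^ (j + 1)) (Pi.single ⟨i + j + 1, hij'⟩ (Ideal.Quotient.mk _ h) :
          Uspace F q m s) =
        (Pi.single ⟨i, by omega⟩ (Ideal.Quotient.mk _
          (h.comp (X - C ((j + 1 : ℕ) : F)) *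
            (pShift q i) ^ (s ⟨i, by omega⟩ - s ⟨i + j + 1, hij'⟩))) : Uspace F q m s)
      rw [pow_succ]
      show (T ^ j) (T _) = _
      rw [Tstep q m s T hT (i + j) hij' h,
        ih i (by omega) _]
      have hle1 : s ⟨i + j + 1, hij⟩ ≤ s ⟨i + j, by omega⟩ :=
        hdec _ _ (by simp [Fin.mk_le_mk])
      have hle2 : s ⟨i + j, by omega⟩ ≤ s ⟨i, by omega⟩ :=
        hdec _ _ (by simp [Fin.mk_le_mk])
      rw [mul_comp, pow_comp, comp_sub_sub,
        show (pShift q (i + j)).comp (X - C (j : F)) = pShift q i from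
          q_comp_comp q i j,
        show (1 : F) + (j : F) = ((j + 1 : ℕ) : F) by push_cast; ring,
        mul_assoc, ← pow_add,
        show s ⟨i + j, by omega⟩ - s ⟨i + j + 1, hij⟩ +
            (s ⟨i, by omega⟩ - s ⟨i + j, by omega⟩) =
          s ⟨i, by omega⟩ - s ⟨i + j + 1, hij⟩ by omega]

lemma Tvanish (hT : IsTmap q m s T) :
    ∀ (j i : ℕ) (hi : i < m), i < j → ∀ h : Polynomial F,
      (T ^ j) (Pi.single ⟨i, hi⟩ (Ideal.Quotient.mk _ h) : Uspace F q m s) = 0 := by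
  intro j
  induction j with
  | zero => omega
  | succ j ih =>
      intro i hi hij h
      rw [pow_succ]
      show (T ^ j) (T _) = 0
      match i with
      | 0 => rw [Tzero' q m s T hT hi h, map_zero]
      | Nat.succ k =>
          rw [Tstep q m s T hT k hi h]
          exact ih k (by omega) (by omega) _

end Tlem

/-- The linear map `F[X] → End_F(U)`, `g ↦ T^j ∘ g(E)`, whose image is the subspace
`T^j·𝓔` of `End_F(U)`. -/
noncomputable def psiMap {F : Type*} [Field F] (q : Polynomial F) (m : ℕ) (s : Fin m → ℕ)
    (T : Module.End F (Uspace F q m s)) (j : ℕ) :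
    Polynomial F →ₗ[F] Module.End F (Uspace F q m s) :=
  (LinearMap.mulLeft F (T ^ j)).comp (Polynomial.aeval (Eop F q m s)).toLinearMap

/-- For `1 ≤ j < m`, the linear map `F[X] → End_F(U)`,
`g ↦ T^j ∘ g(E)` (which is tautologically surjective onto its image `T^j𝓔`) has kernel
exactly the ideal `(p₁^{s_{j+1}})`; in particular `dim_F T^j𝓔 = d·s_{j+1}`.
Moreover `T^m = 0`.  (0-based indexing: the paper's `s_{j+1}` is `s ⟨j, _⟩`.) -/
theorem kernel_and_dim_of_TjE
    {F : Type*} [Field F] (q : Polynomial F) (d m : ℕ) (s : Fin m → ℕ)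
    (hdata : GoodData F q d m s)
    (T : Module.End F (Uspace F q m s)) (hT : IsTmap q m s T)
    (j : ℕ) (h1 : 1 ≤ j) (hj : j < m) :
    (∀ g : Polynomial F, psiMap q m s T j g = 0 ↔ g ∈ Ideal.span {q ^ s ⟨j, hj⟩}) ∧
    Module.finrank F (LinearMap.range (psiMap q m s T j)) = d * s ⟨j, hj⟩ ∧
    T ^ m = 0 := by
  have hq0 : q ≠ 0 := hdata.monic.ne_zero
  have psi_apply : ∀ (g : Polynomial F) (u : Uspace F q m s),
      psiMap q m s T j g u = (T ^ j) ((Polynomial.aeval (Eop F q m s) g) u) :=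
    fun g u => rfl
  -- kernel characterization
  have hker_iff : ∀ g : Polynomial F,
      psiMap q m s T j g = 0 ↔ g ∈ Ideal.span {q ^ s ⟨j, hj⟩} := by
    intro g
    constructor
    · intro hg
      have h0m : (0 : ℕ) + j < m := by omega
      have happ := congrFun (congrArg DFunLike.coe hg)
        (Pi.single ⟨0 + j, h0m⟩ (Ideal.Quotient.mk _ (1 : Polynomial F)) : Uspace F q m s)
      replace happ := (psi_apply g _).symm.trans (happ.trans (LinearMap.zero_apply _))
      rw [aeval_Eop_single, Tpow q m s T hdata.dec hT j 0 h0m _] at happ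
      have h00 := congrFun happ ⟨0, by omega⟩
      rw [Pi.single_eq_same] at h00
      have hmem := Ideal.Quotient.eq_zero_iff_mem.mp h00
      rw [Ideal.mem_span_singleton] at hmem
      rw [pShift_zero, mul_one, comp_add_sub,
        show (((⟨0 + j, h0m⟩ : Fin m) : ℕ) : F) - (j : F) = 0 by
          simp,
        C_0, add_zero, comp_X] at hmem
      have hsj : s ⟨0 + j, h0m⟩ = s ⟨j, hj⟩ := by
        congr 1
        exact Fin.ext (Nat.zero_add j)
      rw [hsj] at hmem
      have hle : s ⟨j, hj⟩ ≤ s ⟨0, by omega⟩ :=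
        hdata.dec _ _ (by simp [Fin.mk_le_mk])
      have hdvd2 : q ^ s ⟨j, hj⟩ * q ^ (s ⟨0, by omega⟩ - s ⟨j, hj⟩) ∣
          g * q ^ (s ⟨0, by omega⟩ - s ⟨j, hj⟩) := by
        rw [← pow_add,
          show s ⟨j, hj⟩ + (s (⟨0, by omega⟩ : Fin m) - s ⟨j, hj⟩) =
            s ⟨0, by omega⟩ from by omega]
        exact hmem
      exact Ideal.mem_span_singleton.mpr
        ((mul_dvd_mul_iff_right (pow_ne_zero _ hq0)).mp hdvd2)
    · intro hg
      obtain ⟨c, rfl⟩ := Ideal.mem_span_singleton.mp hg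
      apply LinearMap.ext; intro u
      rw [LinearMap.zero_apply]
      conv_lhs => rw [← Finset.univ_sum_single u]
      refine (map_sum _ _ _).trans ?_
      refine Finset.sum_eq_zero fun i _ => ?_
      obtain ⟨h, hh⟩ := Ideal.Quotient.mk_surjective (u i)
      rw [← hh]
      refine (psi_apply _ _).trans ?_
      rw [aeval_Eop_single]
      rcases lt_or_ge (i : ℕ) j with hij | hij
      · exact Tvanish q m s T hT j (i : ℕ) i.isLt hij _
      · have hieq : i = ⟨((i : ℕ) - j) + j, by omega⟩ := Fin.ext (by simp; omega)
        rw [hieq, Tpow q m s T hdata.dec hT j ((i : ℕ) - j) (by omega) _]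
        refine single_mk_eq_zero q m s _ _ ?_
        simp only [Fin.val_mk]
        have hkey : ((q ^ s ⟨j, hj⟩ * c).comp (X + C ((((i : ℕ) - j + j : ℕ)) : F)) * h).comp
              (X - C (j : F)) =
            pShift q ((i : ℕ) - j) ^ s ⟨j, hj⟩ *
              (((c.comp (X + C ((((i : ℕ) - j + j : ℕ)) : F))).comp (X - C (j : F))) *
                h.comp (X - C (j : F))) := by
          simp only [mul_comp, pow_comp]
          rw [q_comp_comp q ((i : ℕ) - j) j]
          ring
        rw [hkey]
        have hle1 : s ⟨(i : ℕ) - j + j, by omega⟩ ≤ s ⟨j, hj⟩ :=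
          hdata.dec _ _ (Fin.mk_le_mk.mpr (by omega))
        have hle2 : s ⟨(i : ℕ) - j + j, by omega⟩ ≤ s ⟨(i : ℕ) - j, by omega⟩ :=
          hdata.dec _ _ (Fin.mk_le_mk.mpr (by omega))
        calc pShift q ((i : ℕ) - j) ^ s ⟨(i : ℕ) - j, by omega⟩
            ∣ pShift q ((i : ℕ) - j) ^
                (s ⟨j, hj⟩ + (s ⟨(i : ℕ) - j, by omega⟩ - s ⟨(i : ℕ) - j + j, by omega⟩)) :=
              pow_dvd_pow _ (by omega)
          _ ∣ _ := by
              rw [pow_add]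
              exact mul_dvd_mul (dvd_mul_right _ _) dvd_rfl
  have hker : LinearMap.ker (psiMap q m s T j) =
      Submodule.restrictScalars F (Ideal.span {q ^ s ⟨j, hj⟩}) := by
    ext g
    simp only [LinearMap.mem_ker, Submodule.restrictScalars_mem]
    exact hker_iff g
  refine ⟨hker_iff, ?_, ?_⟩
  · have e1 := (LinearMap.quotKerEquivRange (psiMap q m s T j)).finrank_eq
    rw [← e1, hker,
      (Submodule.Quotient.restrictScalarsEquiv F (Ideal.span {q ^ s ⟨j, hj⟩})).finrank_eq]
    have hne : q ^ s ⟨j, hj⟩ ≠ 0 := pow_ne_zero _ hq0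
    have h2 := (AdjoinRoot.powerBasis hne).finrank
    rw [AdjoinRoot.powerBasis_dim] at h2
    have h3 : Module.finrank F (Polynomial F ⧸ Ideal.span {q ^ s ⟨j, hj⟩}) =
        (q ^ s ⟨j, hj⟩).natDegree := h2
    rw [h3, natDegree_pow, hdata.deg, Nat.mul_comm]
  · apply LinearMap.ext; intro u
    rw [LinearMap.zero_apply]
    conv_lhs => rw [← Finset.univ_sum_single u]
    refine (map_sum _ _ _).trans ?_
    refine Finset.sum_eq_zero fun i _ => ?_
    obtain ⟨h, hh⟩ := Ideal.Quotient.mk_surjective (u i)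
    rw [← hh]
    exact Tvanish q m s T hT m (i : ℕ) i.isLt i.isLt _
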